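/- Let R be a Noetherian commutative ring and M an R-module, and let (M_i)_{i∈I} be the directed family of finitely generated submodules of M. Then M is flat if and only if for every R-module N the natural map colim_i Hom_R(M_i*, N) → M ⊗_R N is an isomorphism, where the maps Hom_R(M_i*, N) → M ⊗_R N are induced by the natural pairings. -/

import Mathlib

set_option maxRecDepth 8000
set_option maxHeartbeats 1000000


universe u

open TensorProduct

section

variable (R : Type u) [CommRing R] (M : Type u) [AddCommGroup M] [Module R M]
  (N : Type u) [AddCommGroup N] [Module R N]

/-- The index set: finitely generated submodules of `M`, directed by inclusion. -/
abbrev FGSub := {P : Submodule R M // P.FG}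

/-- The directed system `i ↦ Hom((M i)*, N)` over the finitely generated submodules of `M`,
with transition maps given by precomposition with the restrictions `(M j)* → (M i)*`. -/
noncomputable def homDualSystem (i j : FGSub R M) (h : i ≤ j) :
    (Module.Dual R i.1 →ₗ[R] N) →ₗ[R] (Module.Dual R j.1 →ₗ[R] N) :=
  (LinearMap.llcomp R (Module.Dual R j.1) (Module.Dual R i.1) N).flip
    ((Submodule.inclusion h).dualMap)

/- ### Auxiliary material -/

instance : Nonempty (FGSub R M) := ⟨⟨⊥, Submodule.fg_bot⟩⟩

instance : IsDirected (FGSub R M) (· ≤ ·) :=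
  ⟨fun i j => ⟨⟨i.1 ⊔ j.1, i.2.sup j.2⟩,
    Subtype.coe_le_coe.mp le_sup_left, Subtype.coe_le_coe.mp le_sup_right⟩⟩

theorem homDualSystem_apply (i j : FGSub R M) (h : i ≤ j) (f : Module.Dual R i.1 →ₗ[R] N) :
    homDualSystem R M N i j h f = f ∘ₗ (Submodule.inclusion h).dualMap := rfl

instance : DirectedSystem (fun i : FGSub R M => Module.Dual R i.1 →ₗ[R] N)
    (fun i j h => homDualSystem R M N i j h) where
  map_self := by
    intro i f
    ext w
    exact congrArg f (by ext m; rfl)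
  map_map := by
    intro k j i hij hjk f
    ext w
    exact congrArg f (by ext m; rfl)

variable {M} in
/-- The span of a single element, as a finitely generated submodule. -/
def spanFG (m : M) : FGSub R M := ⟨Submodule.span R {m}, Submodule.fg_span_singleton m⟩

variable {R M} in
theorem spanFG_le {m : M} {i : FGSub R M} (hm : m ∈ i.1) : spanFG R m ≤ i :=
  (Submodule.span_singleton_le_iff_mem m i.1).mpr hm

variable {R M N} in
/-- The element of `Hom((M i)*, N)` corresponding to the pair `(m, n)`. -/
noncomputable def pairElt (i : FGSub R M) (m : i.1) (n : N) : Module.Dual R i.1 →ₗ[R] N :=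
  (Module.Dual.eval R i.1 m).smulRight n

variable {R M N} in
@[simp] theorem pairElt_apply (i : FGSub R M) (m : i.1) (n : N) (w : Module.Dual R i.1) :
    pairElt i m n w = w m • n := rfl

variable {R M N} in
theorem pairElt_add_fst (i : FGSub R M) {m m' : M} (hm : m ∈ i.1) (hm' : m' ∈ i.1)
    (hs : m + m' ∈ i.1) (n : N) :
    pairElt i ⟨m + m', hs⟩ n = pairElt i ⟨m, hm⟩ n + pairElt i ⟨m', hm'⟩ n := by
  ext w
  rw [LinearMap.add_apply, pairElt_apply, pairElt_apply, pairElt_apply,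
    show (⟨m + m', hs⟩ : i.1) = ⟨m, hm⟩ + ⟨m', hm'⟩ from rfl, map_add, add_smul]

variable {R M N} in
theorem pairElt_smul_fst (i : FGSub R M) (c : R) {m : M} (hm : m ∈ i.1)
    (hs : c • m ∈ i.1) (n : N) :
    pairElt i ⟨c • m, hs⟩ n = c • pairElt i ⟨m, hm⟩ n := by
  ext w
  rw [LinearMap.smul_apply, pairElt_apply, pairElt_apply,
    show (⟨c • m, hs⟩ : i.1) = c • (⟨m, hm⟩ : i.1) from rfl, map_smul, smul_assoc]

/-- The natural pairing map `P ⊗ N → Hom(P*, N)`. -/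
noncomputable def psi (P : Type u) [AddCommGroup P] [Module R P] :
    P ⊗[R] N →ₗ[R] (Module.Dual R P →ₗ[R] N) :=
  TensorProduct.lift (LinearMap.mk₂ R (fun p n => (Module.Dual.eval R P p).smulRight n)
    (fun p q n => by
      ext w
      simp only [LinearMap.smulRight_apply, LinearMap.add_apply, map_add, add_smul])
    (fun c p n => by
      ext w
      simp only [LinearMap.smulRight_apply, LinearMap.smul_apply, map_smul, smul_assoc])
    (fun p n n' => by
      ext w
      simp only [LinearMap.smulRight_apply, LinearMap.add_apply, smul_add])
    (fun c p n => by
      ext w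
      simp only [LinearMap.smulRight_apply, LinearMap.smul_apply]
      exact smul_comm _ _ _))

@[simp] theorem psi_tmul (P : Type u) [AddCommGroup P] [Module R P] (p : P) (n : N)
    (w : Module.Dual R P) : psi R N P (p ⊗ₜ n) w = w p • n := rfl

theorem psi_natural {P Q : Type u} [AddCommGroup P] [Module R P] [AddCommGroup Q] [Module R Q]
    (c : P →ₗ[R] Q) (x : P ⊗[R] N) :
    psi R N Q (c.rTensor N x) = (psi R N P x) ∘ₗ c.dualMap := by
  induction x using TensorProduct.induction_on with
  | zero => simp
  | tmul p n => ext w; simp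
  | add x y hx hy => simp only [map_add, hx, hy, LinearMap.add_comp]

theorem psi_apply_lapply (κ : Type u) [Fintype κ] [DecidableEq κ] (x : (κ →₀ R) ⊗[R] N) (k : κ) :
    psi R N (κ →₀ R) x (Finsupp.lapply k) = TensorProduct.finsuppScalarLeft R N κ x k := by
  induction x using TensorProduct.induction_on with
  | zero => simp
  | tmul p n => simp [TensorProduct.finsuppScalarLeft_apply_tmul_apply]
  | add x y hx hy => simp [hx, hy]

theorem psi_finsupp_injective (κ : Type u) [Fintype κ] [DecidableEq κ] {x : (κ →₀ R) ⊗[R] N}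
    (hx : psi R N (κ →₀ R) x = 0) : x = 0 := by
  have h0 : TensorProduct.finsuppScalarLeft R N κ x = 0 := by
    ext k
    rw [← psi_apply_lapply, hx]
    rfl
  have := (map_eq_zero_iff (TensorProduct.finsuppScalarLeft R N κ)
    (TensorProduct.finsuppScalarLeft R N κ).injective).mp h0
  simpa using this

theorem psi_finsupp_surjective (κ : Type u) [Fintype κ]
    (g : Module.Dual R (κ →₀ R) →ₗ[R] N) :
    psi R N (κ →₀ R) (∑ k : κ, Finsupp.single k (1 : R) ⊗ₜ[R] g (Finsupp.lapply k)) = g := by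
  ext w
  rw [map_sum]
  have hsum : ∀ u : κ →₀ R, w u = ∑ k : κ, u k • w (Finsupp.single k 1) := by
    intro u
    conv_lhs => rw [← Finsupp.univ_sum_single u]
    rw [map_sum]
    refine Finset.sum_congr rfl fun k _ => ?_
    rw [show Finsupp.single k (u k) = u k • Finsupp.single k (1 : R) from by
      rw [Finsupp.smul_single', mul_one], map_smul]
  have key : (∑ k : κ, w (Finsupp.single k 1) • (Finsupp.lapply k :
      Module.Dual R (κ →₀ R))) = w := by
    refine LinearMap.ext fun u => ?_
    rw [LinearMap.sum_apply, hsum u]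
    refine Finset.sum_congr rfl fun k _ => ?_
    simp [Finsupp.lapply_apply, smul_eq_mul, mul_comm]
  calc (∑ k : κ, psi R N (κ →₀ R) (Finsupp.single k (1 : R) ⊗ₜ[R] g (Finsupp.lapply k))) w
      = ∑ k : κ, w (Finsupp.single k 1) • g (Finsupp.lapply k) := by
        rw [LinearMap.sum_apply]; exact Finset.sum_congr rfl fun k _ => rfl
    _ = ∑ k : κ, g (w (Finsupp.single k 1) • (Finsupp.lapply k :
          Module.Dual R (κ →₀ R))) := by
        refine Finset.sum_congr rfl fun k _ => (map_smul g _ _).symm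
    _ = g (∑ k : κ, w (Finsupp.single k 1) • (Finsupp.lapply k :
          Module.Dual R (κ →₀ R))) := (map_sum g _ _).symm
    _ = g w := by rw [key]

section DL

variable [DecidableEq (FGSub R M)]

variable {R M N} in
theorem of_pairElt (i : FGSub R M) (m : M) (hm : m ∈ i.1) (n : N) :
    Module.DirectLimit.of R (FGSub R M) (fun i : FGSub R M => Module.Dual R i.1 →ₗ[R] N)
      (homDualSystem R M N) i (pairElt i ⟨m, hm⟩ n) =
    Module.DirectLimit.of R (FGSub R M) (fun i : FGSub R M => Module.Dual R i.1 →ₗ[R] N)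
      (homDualSystem R M N) (spanFG R m)
      (pairElt (spanFG R m) ⟨m, Submodule.mem_span_singleton_self m⟩ n) := by
  have h : spanFG R m ≤ i := spanFG_le hm
  have h2 : pairElt i ⟨m, hm⟩ n = homDualSystem R M N (spanFG R m) i h
      (pairElt (spanFG R m) ⟨m, Submodule.mem_span_singleton_self m⟩ n) := by
    ext w; rfl
  rw [h2, Module.DirectLimit.of_f]

/-- The natural map `M ⊗ N → colim_i Hom((M i)*, N)`. -/
noncomputable def Psi : M ⊗[R] N →ₗ[R]
    Module.DirectLimit (fun i : FGSub R M => Module.Dual R i.1 →ₗ[R] N)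
      (homDualSystem R M N) :=
  TensorProduct.lift (LinearMap.mk₂ R
    (fun m n => Module.DirectLimit.of R (FGSub R M)
      (fun i : FGSub R M => Module.Dual R i.1 →ₗ[R] N) (homDualSystem R M N) (spanFG R m)
      (pairElt (spanFG R m) ⟨m, Submodule.mem_span_singleton_self m⟩ n))
    (fun m m' n => by
      have hfg : (Submodule.span R {m} ⊔ Submodule.span R {m'}).FG :=
        (Submodule.fg_span_singleton m).sup (Submodule.fg_span_singleton m')
      have hm : m ∈ Submodule.span R {m} ⊔ Submodule.span R {m'} :=
        Submodule.mem_sup_left (Submodule.mem_span_singleton_self m)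
      have hm' : m' ∈ Submodule.span R {m} ⊔ Submodule.span R {m'} :=
        Submodule.mem_sup_right (Submodule.mem_span_singleton_self m')
      have hs : m + m' ∈ Submodule.span R {m} ⊔ Submodule.span R {m'} := add_mem hm hm'
      rw [← of_pairElt ⟨_, hfg⟩ (m + m') hs n, ← of_pairElt ⟨_, hfg⟩ m hm n,
        ← of_pairElt ⟨_, hfg⟩ m' hm' n, pairElt_add_fst ⟨_, hfg⟩ hm hm' hs n, map_add])
    (fun c m n => by
      have hm : m ∈ (spanFG R m).1 := Submodule.mem_span_singleton_self m
      have hs : c • m ∈ (spanFG R m).1 := Submodule.smul_mem _ c hm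
      rw [← of_pairElt (spanFG R m) (c • m) hs n, pairElt_smul_fst (spanFG R m) c hm hs n,
        map_smul])
    (fun m n n' => by
      rw [show pairElt (spanFG R m) ⟨m, Submodule.mem_span_singleton_self m⟩ (n + n') =
        pairElt (spanFG R m) ⟨m, Submodule.mem_span_singleton_self m⟩ n +
        pairElt (spanFG R m) ⟨m, Submodule.mem_span_singleton_self m⟩ n' from by
          ext w
          rw [LinearMap.add_apply, pairElt_apply, pairElt_apply, pairElt_apply, smul_add],
        map_add])
    (fun c m n => by
      rw [show pairElt (spanFG R m) ⟨m, Submodule.mem_span_singleton_self m⟩ (c • n) =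
        c • pairElt (spanFG R m) ⟨m, Submodule.mem_span_singleton_self m⟩ n from by
          ext w
          rw [LinearMap.smul_apply, pairElt_apply, pairElt_apply]
          exact smul_comm _ _ _, map_smul]))

@[simp] theorem Psi_tmul (m : M) (n : N) :
    Psi R M N (m ⊗ₜ n) = Module.DirectLimit.of R (FGSub R M)
      (fun i : FGSub R M => Module.Dual R i.1 →ₗ[R] N) (homDualSystem R M N) (spanFG R m)
      (pairElt (spanFG R m) ⟨m, Submodule.mem_span_singleton_self m⟩ n) := rfl

theorem Psi_rTensor_subtype (i : FGSub R M) (x : i.1 ⊗[R] N) :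
    Psi R M N ((i.1.subtype).rTensor N x) =
      Module.DirectLimit.of R (FGSub R M)
        (fun i : FGSub R M => Module.Dual R i.1 →ₗ[R] N) (homDualSystem R M N) i
        (psi R N i.1 x) := by
  induction x using TensorProduct.induction_on with
  | zero => simp
  | tmul p n =>
    rw [LinearMap.rTensor_tmul]
    have h1 : (i.1.subtype p) = (p : M) := rfl
    rw [h1, Psi_tmul, show psi R N i.1 (p ⊗ₜ n) = pairElt i p n from rfl]
    exact (of_pairElt i (p : M) p.2 n).symm
  | add x y hx hy => simp only [map_add, hx, hy]

/-- Every element of `M ⊗ N` comes from some `M_i ⊗ N`. -/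
theorem exists_fg_rep (z : M ⊗[R] N) :
    ∃ (i : FGSub R M) (x : i.1 ⊗[R] N), (i.1.subtype).rTensor N x = z := by
  induction z using TensorProduct.induction_on with
  | zero => exact ⟨⟨⊥, Submodule.fg_bot⟩, 0, by simp⟩
  | tmul m n =>
    exact ⟨spanFG R m, ⟨m, Submodule.mem_span_singleton_self m⟩ ⊗ₜ n, rfl⟩
  | add z z' hz hz' =>
    obtain ⟨i, x, rfl⟩ := hz
    obtain ⟨i', x', rfl⟩ := hz'
    obtain ⟨j, hij, hi'j⟩ := exists_ge_ge i i'
    refine ⟨j, (Submodule.inclusion hij).rTensor N x +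
      (Submodule.inclusion hi'j).rTensor N x', ?_⟩
    rw [map_add, ← LinearMap.rTensor_comp_apply, ← LinearMap.rTensor_comp_apply,
      Submodule.subtype_comp_inclusion, Submodule.subtype_comp_inclusion]

theorem Psi_bijective [IsNoetherianRing R] [Module.Flat R M] :
    Function.Bijective (Psi R M N) := by
  have fact : ∀ i : FGSub R M, ∃ (κ : Type u) (_ : Fintype κ) (a : i.1 →ₗ[R] (κ →₀ R))
      (y : (κ →₀ R) →ₗ[R] M), i.1.subtype = y ∘ₗ a := by
    intro i
    haveI : Module.Finite R i.1 := Module.Finite.iff_fg.mpr i.2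
    haveI : Module.FinitePresentation R i.1 :=
      (Module.finitePresentation_iff_finite (R := R) (M := i.1)).mpr ‹_›
    obtain ⟨k, a, y, hay⟩ := Module.Flat.exists_factorization_of_isFinitelyPresented i.1.subtype
    let e : (Fin k →₀ R) ≃ₗ[R] (ULift.{u} (Fin k) →₀ R) := Finsupp.domLCongr Equiv.ulift.symm
    exact ⟨ULift (Fin k), inferInstance, e.toLinearMap ∘ₗ a, y ∘ₗ e.symm.toLinearMap,
      by rw [hay]; ext x; simp⟩
  constructor
  · rw [injective_iff_map_eq_zero]
    intro z hz
    obtain ⟨i, x, rfl⟩ := exists_fg_rep R M N z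
    rw [Psi_rTensor_subtype] at hz
    obtain ⟨j, hij, hj⟩ := Module.DirectLimit.of.zero_exact hz
    rw [homDualSystem_apply] at hj
    have hnat : psi R N j.1 ((Submodule.inclusion hij).rTensor N x) = 0 := by
      rw [psi_natural]; exact hj
    obtain ⟨κ, _, a, y, hay⟩ := fact j
    haveI := Classical.decEq κ
    have h0 : a.rTensor N ((Submodule.inclusion hij).rTensor N x) = 0 := by
      apply psi_finsupp_injective
      rw [psi_natural, hnat, LinearMap.zero_comp]
    have hsub : i.1.subtype = (y ∘ₗ a) ∘ₗ Submodule.inclusion hij := by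
      rw [← hay, Submodule.subtype_comp_inclusion]
    have hcalc : (i.1.subtype).rTensor N x =
        y.rTensor N (a.rTensor N ((Submodule.inclusion hij).rTensor N x)) := by
      rw [← LinearMap.rTensor_comp_apply, ← LinearMap.rTensor_comp_apply, ← hsub]
    rw [hcalc, h0, map_zero]
  · intro z
    obtain ⟨i, f, rfl⟩ := Module.DirectLimit.exists_of z
    obtain ⟨κ, _, a, y, hay⟩ := fact i
    have hrange : (LinearMap.range y).FG := by
      have h1 : (⊤ : Submodule R (κ →₀ R)).FG := Module.Finite.fg_top
      have h2 := h1.map y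
      rwa [Submodule.map_top] at h2
    set j : FGSub R M := ⟨i.1 ⊔ LinearMap.range y, i.2.sup hrange⟩ with hj
    have hij : i ≤ j := Subtype.coe_le_coe.mp le_sup_left
    set b : (κ →₀ R) →ₗ[R] j.1 := y.codRestrict j.1
      (fun u => Submodule.mem_sup_right (LinearMap.mem_range_self y u)) with hb
    have hba : b ∘ₗ a = Submodule.inclusion hij := by
      ext p
      show y (a p) = (p : M)
      rw [← LinearMap.comp_apply, ← hay]
      rfl
    set g : Module.Dual R (κ →₀ R) →ₗ[R] N := f ∘ₗ a.dualMap with hg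
    refine ⟨(j.1.subtype).rTensor N (b.rTensor N
      (∑ k : κ, Finsupp.single k (1 : R) ⊗ₜ[R] g (Finsupp.lapply k))), ?_⟩
    rw [Psi_rTensor_subtype, psi_natural, psi_finsupp_surjective]
    refine Eq.trans ?_ (Module.DirectLimit.of_f (R := R) (G := fun i : FGSub R M => Module.Dual R i.1 →ₗ[R] N)
      (f := homDualSystem R M N) (hij := hij) (x := f))
    congr 1
    rw [homDualSystem_apply, hg, LinearMap.comp_assoc, ← hba]
    ext w
    rfl

end DL

/-- Over a Noetherian ring, `M` is flat iff for every module `N` the natural map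
`colim_i Hom((M i)*, N) → M ⊗ N` (over the finitely generated submodules `M i ⊆ M`, induced
by the natural pairings `m ⊗ n ↦ (w ↦ w m • n)`) is an isomorphism. -/
theorem flat_iff_tensor_eq_colimit_hom_dual
    [IsNoetherianRing R] [DecidableEq (FGSub R M)] :
    Module.Flat R M ↔
      ∀ (N : Type u) [AddCommGroup N] [Module R N],
        ∃ e : Module.DirectLimit (fun i : FGSub R M => Module.Dual R i.1 →ₗ[R] N)
            (homDualSystem R M N) ≃ₗ[R] M ⊗[R] N,
          ∀ (i : FGSub R M) (m : i.1) (n : N),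
            e (Module.DirectLimit.of R (FGSub R M)
                (fun i : FGSub R M => Module.Dual R i.1 →ₗ[R] N)
                (homDualSystem R M N) i
                ((Module.Dual.eval R i.1 m).smulRight n)) = (m : M) ⊗ₜ[R] n := by
  constructor
  · intro hM N _ _
    refine ⟨(LinearEquiv.ofBijective (Psi R M N) (Psi_bijective R M N)).symm, ?_⟩
    intro i m n
    have h1 : Module.DirectLimit.of R (FGSub R M)
        (fun i : FGSub R M => Module.Dual R i.1 →ₗ[R] N) (homDualSystem R M N) i
        ((Module.Dual.eval R i.1 m).smulRight n) = Psi R M N ((m : M) ⊗ₜ[R] n) := by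
      have h2 := Psi_rTensor_subtype R M N i (m ⊗ₜ n)
      rw [LinearMap.rTensor_tmul] at h2
      exact h2.symm
    rw [h1]
    exact (LinearEquiv.symm_apply_eq _).mpr rfl
  · intro h
    have key : ∀ (N : Type u) [AddCommGroup N] [Module R N],
        Function.Bijective (Psi R M N) := by
      intro N _ _
      obtain ⟨e, he⟩ := h N
      have hsymm : (e.symm : M ⊗[R] N →ₗ[R] _) = Psi R M N := by
        apply TensorProduct.ext'
        intro m n
        have h3 := he (spanFG R m) ⟨m, Submodule.mem_span_singleton_self m⟩ n
        show e.symm (m ⊗ₜ n) = _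
        rw [Psi_tmul, ← h3, e.symm_apply_apply]
        rfl
      have hb := e.symm.bijective
      have hfun : ⇑e.symm = ⇑(Psi R M N) := by rw [← hsymm]; rfl
      rwa [hfun] at hb
    rw [Module.Flat.iff_lTensor_injective']
    intro I
    -- the map on colimits induced by postcomposition with `I.subtype`
    set tau : Module.DirectLimit (fun i : FGSub R M => Module.Dual R i.1 →ₗ[R] I)
        (homDualSystem R M I) →ₗ[R]
        Module.DirectLimit (fun i : FGSub R M => Module.Dual R i.1 →ₗ[R] R)
        (homDualSystem R M R) :=
      Module.DirectLimit.lift R (FGSub R M) _ (homDualSystem R M I)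
        (fun i => (Module.DirectLimit.of R (FGSub R M)
            (fun i : FGSub R M => Module.Dual R i.1 →ₗ[R] R) (homDualSystem R M R) i) ∘ₗ
          (LinearMap.llcomp R (Module.Dual R i.1) I R I.subtype))
        (fun i j hij f => by
          rw [LinearMap.comp_apply, LinearMap.comp_apply, LinearMap.llcomp_apply',
            LinearMap.llcomp_apply', homDualSystem_apply, ← LinearMap.comp_assoc,
            ← homDualSystem_apply, Module.DirectLimit.of_f]) with htau
    have tau_of : ∀ (i : FGSub R M) (f : Module.Dual R i.1 →ₗ[R] I),
        tau (Module.DirectLimit.of R (FGSub R M)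
          (fun i : FGSub R M => Module.Dual R i.1 →ₗ[R] I) (homDualSystem R M I) i f) =
        Module.DirectLimit.of R (FGSub R M)
          (fun i : FGSub R M => Module.Dual R i.1 →ₗ[R] R) (homDualSystem R M R) i
          (I.subtype ∘ₗ f) := by
      intro i f
      rw [htau]
      exact Module.DirectLimit.lift_of _ _ _
    have tau_inj : Function.Injective tau := by
      rw [injective_iff_map_eq_zero]
      intro z hz
      obtain ⟨i, f, rfl⟩ := Module.DirectLimit.exists_of z
      rw [tau_of] at hz
      obtain ⟨j, hij, hj⟩ := Module.DirectLimit.of.zero_exact hz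
      have hzero : homDualSystem R M I i j hij f = 0 := by
        refine LinearMap.ext fun w => ?_
        refine Submodule.injective_subtype I ?_
        show I.subtype (f ((Submodule.inclusion hij).dualMap w)) = I.subtype 0
        rw [map_zero]
        exact LinearMap.congr_fun hj w
      have h5 : Module.DirectLimit.of R (FGSub R M)
          (fun i : FGSub R M => Module.Dual R i.1 →ₗ[R] I) (homDualSystem R M I) i f =
          Module.DirectLimit.of R (FGSub R M)
            (fun i : FGSub R M => Module.Dual R i.1 →ₗ[R] I) (homDualSystem R M I) j
            (homDualSystem R M I i j hij f) := by
        rw [Module.DirectLimit.of_f]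
      rw [h5, hzero, map_zero]
    have square : ∀ z : M ⊗[R] I,
        Psi R M R ((I.subtype).lTensor M z) = tau (Psi R M I z) := by
      intro z
      induction z using TensorProduct.induction_on with
      | zero => simp
      | tmul m a =>
        rw [LinearMap.lTensor_tmul, Psi_tmul, Psi_tmul, tau_of]
        congr 1
      | add z z' hz hz' => simp only [map_add, hz, hz']
    intro x y hxy
    apply (key I).injective
    apply tau_inj
    rw [← square, ← square, hxy]

end
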